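/- Let D be a Dedekind domain that contains an infinite field. Then every subgroup H of finite index in SL₂(D) has level D; that is, T(r) belongs to the normal core of H in SL₂(D) for every r ∈ D. -/

import Mathlib

open Matrix

/-- The translation matrix `T(r) = [[1, r], [0, 1]]` in `SL₂(R)`. -/
def Tm (R : Type*) [CommRing R] (r : R) : Matrix.SpecialLinearGroup (Fin 2) R :=
  ⟨!![1, r; 0, 1], by simp [Matrix.det_fin_two_of]⟩

/-- The principal congruence subgroup `SL₂(R, 𝔮)`, the kernel of reduction mod `𝔮`. -/
def SLmod (R : Type*) [CommRing R] (q : Ideal R) :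
    Subgroup (Matrix.SpecialLinearGroup (Fin 2) R) :=
  (Matrix.SpecialLinearGroup.map (Ideal.Quotient.mk q)).ker

/-- `H` is a congruence subgroup: it contains a principal congruence subgroup of
nonzero level. -/
def IsCongruence {R : Type*} [CommRing R]
    (H : Subgroup (Matrix.SpecialLinearGroup (Fin 2) R)) : Prop :=
  ∃ q : Ideal R, q ≠ ⊥ ∧ SLmod R q ≤ H

/-- `q` is the level `l(H)` of `H`: the largest ideal all of whose associated translations
lie in the normal core of `H` (equivalently, the largest ideal contained in the
quasi-level of `H`). -/
def IsLevel {R : Type*} [CommRing R]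
    (H : Subgroup (Matrix.SpecialLinearGroup (Fin 2) R)) (q : Ideal R) : Prop :=
  (∀ r ∈ q, Tm R r ∈ H.normalCore) ∧
    ∀ I : Ideal R, (∀ r ∈ I, Tm R r ∈ H.normalCore) → I ≤ q

set_option linter.unreachableTactic false
set_option linter.unusedTactic false

lemma Tm_mul {D : Type*} [CommRing D] (x y : D) : Tm D x * Tm D y = Tm D (x + y) := by
  ext i j
  rw [Matrix.SpecialLinearGroup.coe_mul]
  fin_cases i <;> fin_cases j <;>
    simp [Tm, Matrix.mul_apply, Fin.sum_univ_two, add_comm]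

lemma Tm_zero {D : Type*} [CommRing D] :
    Tm D 0 = (1 : Matrix.SpecialLinearGroup (Fin 2) D) := by
  ext i j
  fin_cases i <;> fin_cases j <;> simp [Tm]

lemma Tm_inv {D : Type*} [CommRing D] (x : D) : (Tm D x)⁻¹ = Tm D (-x) := by
  apply inv_eq_of_mul_eq_one_right
  rw [Tm_mul, add_neg_cancel, Tm_zero]

lemma Tm_conj_mem {D : Type*} [CommRing D]
    (N : Subgroup (Matrix.SpecialLinearGroup (Fin 2) D)) [hN : N.Normal]
    (c i x : D) (hci : c * i = 1) (hx : Tm D x ∈ N) : Tm D (c * c * x) ∈ N := by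
  have hd : (!![c, 0; 0, i] : Matrix (Fin 2) (Fin 2) D).det = 1 := by
    simp [Matrix.det_fin_two_of, hci]
  let d : Matrix.SpecialLinearGroup (Fin 2) D := ⟨_, hd⟩
  have h : d * Tm D x * d⁻¹ = Tm D (c * c * x) := by
    rw [mul_inv_eq_iff_eq_mul]
    ext a b
    erw [Matrix.SpecialLinearGroup.coe_mul, Matrix.SpecialLinearGroup.coe_mul]
    fin_cases a <;> fin_cases b <;>
      simp [d, Tm, Matrix.mul_apply, Fin.sum_univ_two] <;>
      first
        | linear_combination c * x * hci
        | linear_combination (-2 * c * x) * hci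
        | linear_combination (-(c * x)) * hci
        | linear_combination (2 * c * x) * hci
  exact h ▸ hN.conj_mem _ hx d


/-- Lemma 1.7. If the Dedekind domain `D` contains an infinite field,
then every finite-index subgroup `H` of `SL₂(D)` has level `D`, i.e. `T(r)` lies in the
normal core of `H` for every `r ∈ D`. -/
theorem statement1 {D : Type*} [CommRing D] [IsDomain D] [IsDedekindDomain D]
    (k : Subring D) (hk : IsField k) (hki : Infinite k)
    (H : Subgroup (Matrix.SpecialLinearGroup (Fin 2) D)) (hH : H.FiniteIndex) :
    ∀ r : D, Tm D r ∈ H.normalCore := by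
  intro r
  haveI := hki
  letI : Field k := hk.toField
  set N := H.normalCore with hN
  haveI : N.Normal := H.normalCore_normal
  haveI := hH
  haveI : N.FiniteIndex := Subgroup.finiteIndex_normalCore H
  haveI : Finite (Matrix.SpecialLinearGroup (Fin 2) D ⧸ N) :=
    Subgroup.finite_quotient_of_finiteIndex
  have hsq : ∀ (c : k) (x : D), Tm D x ∈ N → Tm D ((c : D) * (c : D) * x) ∈ N := by
    intro c x hx
    rcases eq_or_ne c 0 with h0 | h0
    · have : ((c : D)) * (c : D) * x = 0 := by
        rw [h0]; push_cast; ring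
      rw [this, Tm_zero]; exact N.one_mem
    · have h1 : (c * c⁻¹ : k) = 1 := mul_inv_cancel₀ h0
      have h1D : (c : D) * ((c⁻¹ : k) : D) = 1 := by exact_mod_cast congrArg Subtype.val h1
      exact Tm_conj_mem N _ _ x h1D hx
  have hsub : ∀ x y : D, Tm D x ∈ N → Tm D y ∈ N → Tm D (x - y) ∈ N := by
    intro x y hx hy
    have h : Tm D x * (Tm D y)⁻¹ = Tm D (x - y) := by
      rw [Tm_inv, Tm_mul, sub_eq_add_neg]
    exact h ▸ N.mul_mem hx (N.inv_mem hy)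
  by_cases h2 : (2 : k) = 0
  · -- characteristic 2
    obtain ⟨a, b, hab, hfab⟩ := Finite.exists_ne_map_eq_of_infinite
      (fun a : k => (QuotientGroup.mk (Tm D ((a : D) * (a : D) * r)) :
        Matrix.SpecialLinearGroup (Fin 2) D ⧸ N))
    have hmem : Tm D ((b : D) * (b : D) * r - (a : D) * (a : D) * r) ∈ N := by
      have h := QuotientGroup.eq.mp hfab
      rw [Tm_inv, Tm_mul] at h
      convert h using 2
      ring
    have h2D : (2 : D) = 0 := by
      have h := congrArg (Subtype.val : k → D) h2
      push_cast at h
      exact h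
    set e : k := b - a with he_def
    have he : e ≠ 0 := sub_ne_zero.mpr hab.symm
    have heD : ((e : k) : D) * (e : D) * r
        = (b : D) * (b : D) * r - (a : D) * (a : D) * r := by
      push_cast [he_def]
      linear_combination ((a : D) * (a : D) * r - (a : D) * (b : D) * r) * h2D
    have hmem' : Tm D ((e : D) * (e : D) * r) ∈ N := by rw [heD]; exact hmem
    have hfin := hsq e⁻¹ _ hmem'
    have h1 : (e⁻¹ * e : k) = 1 := inv_mul_cancel₀ he
    have h1D : ((e⁻¹ : k) : D) * (e : D) = 1 := by exact_mod_cast congrArg Subtype.val h1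
    have hEq : ((e⁻¹ : k) : D) * ((e⁻¹ : k) : D) * ((e : D) * (e : D) * r) = r := by
      linear_combination (((e⁻¹ : k) : D) * (e : D) * r + r) * h1D
    rwa [hEq] at hfin
  · -- characteristic ≠ 2
    obtain ⟨a, b, hab, hfab⟩ := Finite.exists_ne_map_eq_of_infinite
      (fun a : k => (QuotientGroup.mk (Tm D ((a : D) * r)) :
        Matrix.SpecialLinearGroup (Fin 2) D ⧸ N))
    set w : k := b - a with hw_def
    have hw : w ≠ 0 := sub_ne_zero.mpr hab.symm
    have hmem : Tm D ((w : D) * r) ∈ N := by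
      have h := QuotientGroup.eq.mp hfab
      rw [Tm_inv, Tm_mul] at h
      convert h using 2
      push_cast [hw_def]
      ring
    set p : k := (w⁻¹ + 1) / 2 with hp_def
    set q : k := (w⁻¹ - 1) / 2 with hq_def
    have hpq : ((p * p - q * q) * w : k) = 1 := by
      rw [hp_def, hq_def]
      field_simp
      ring
    have hp := hsq p _ hmem
    have hq := hsq q _ hmem
    have hs := hsub _ _ hp hq
    have h1D : ((p : D) * (p : D) - (q : D) * (q : D)) * (w : D) = 1 := by
      exact_mod_cast congrArg Subtype.val hpq
    have hEq : (p : D) * (p : D) * ((w : D) * r) - (q : D) * (q : D) * ((w : D) * r) = r := by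
      linear_combination r * h1D
    rwa [hEq] at hs
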